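/- Unobservability of yaw: with g = (0,0,−g₃) the gravity vector and H, Φ as in the contact-inertial error system, the vector (e₃, 0, 0, 0) ∈ ℝ¹² (e₃ the third standard basis vector placed in the orientation block) lies in the kernel of HΦᵏ for every k ≥ 0; i.e., rotation about the gravity axis is unobservable. -/

import Mathlib

open Matrix

def skew (ω : Fin 3 → ℝ) : Matrix (Fin 3) (Fin 3) ℝ :=
  !![0, -ω 2, ω 1; ω 2, 0, -ω 0; -ω 1, ω 0, 0]

def b2m (B : Fin 4 → Fin 4 → Matrix (Fin 3) (Fin 3) ℝ) :
    Matrix (Fin 4 × Fin 3) (Fin 4 × Fin 3) ℝ :=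
  Matrix.of fun i j => B i.1 j.1 i.2 j.2

def Amat (g : Fin 3 → ℝ) : Matrix (Fin 4 × Fin 3) (Fin 4 × Fin 3) ℝ :=
  b2m ![![0, 0, 0, 0], ![skew g, 0, 0, 0], ![0, 1, 0, 0], ![0, 0, 0, 0]]

/-- Measurement matrix H = [0 0 −I I]. -/
def Hmat : Matrix (Fin 3) (Fin 4 × Fin 3) ℝ :=
  Matrix.of fun i j => (![0, 0, -1, 1] j.1 : Matrix (Fin 3) (Fin 3) ℝ) i j.2

set_option maxHeartbeats 1000000 in
/-- If `v` is in the kernel of `M`, then `exp M` fixes `v`. -/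
lemma exp_mulVec_fixed {n : Type*} [Fintype n] [DecidableEq n]
    (M : Matrix n n ℝ) (v : n → ℝ) (h : M *ᵥ v = 0) :
    NormedSpace.exp M *ᵥ v = v := by
  letI : SeminormedRing (Matrix n n ℝ) := Matrix.linftyOpSemiNormedRing
  letI : NormedRing (Matrix n n ℝ) := Matrix.linftyOpNormedRing
  letI : NormedAlgebra ℝ (Matrix n n ℝ) := Matrix.linftyOpNormedAlgebra
  have hpow : ∀ m : ℕ, M ^ m *ᵥ v = if m = 0 then v else 0 := by
    intro m
    cases m with
    | zero => simp
    | succ m => rw [pow_succ, ← Matrix.mulVec_mulVec, h, Matrix.mulVec_zero]; simp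
  let L : Matrix n n ℝ →L[ℝ] (n → ℝ) :=
    LinearMap.toContinuousLinearMap
      { toFun := fun A => A *ᵥ v
        map_add' := fun A B => Matrix.add_mulVec A B v
        map_smul' := fun c A => Matrix.smul_mulVec c A v }
  have hL : ∀ A : Matrix n n ℝ, L A = A *ᵥ v := fun A => rfl
  rw [NormedSpace.exp_eq_tsum ℝ]
  have hs : Summable (fun m : ℕ => ((Nat.factorial m : ℝ))⁻¹ • M ^ m) :=
    NormedSpace.expSeries_summable' (𝕂 := ℝ) M
  calc (∑' m : ℕ, ((Nat.factorial m : ℝ))⁻¹ • M ^ m) *ᵥ v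
      = L (∑' m : ℕ, ((Nat.factorial m : ℝ))⁻¹ • M ^ m) := rfl
    _ = ∑' m : ℕ, L (((Nat.factorial m : ℝ))⁻¹ • M ^ m) := (L.map_tsum hs)
    _ = v := by
        have : ∀ m : ℕ, L (((Nat.factorial m : ℝ))⁻¹ • M ^ m) = if m = 0 then v else 0 := by
          intro m
          rw [_root_.map_smul, hL, hpow]
          cases m <;> simp
        simp_rw [this]
        exact tsum_ite_eq 0 (fun _ => v)

/-- The yaw direction vector (e₃,0,0,0). -/
noncomputable def vyaw : Fin 4 × Fin 3 → ℝ :=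
  fun p => ![(![0, 0, 1] : Fin 3 → ℝ), 0, 0, 0] p.1 p.2

lemma Amat_mulVec_vyaw (g₃ : ℝ) : Amat ![0, 0, -g₃] *ᵥ vyaw = 0 := by
  funext p
  obtain ⟨i, j⟩ := p
  fin_cases i <;> fin_cases j <;>
    simp [Amat, b2m, skew, vyaw, Matrix.mulVec, dotProduct,
      Fintype.sum_prod_type, Fin.sum_univ_succ, Matrix.one_apply,
      Matrix.vecHead, Matrix.vecTail]

lemma Hmat_mulVec_vyaw : Hmat *ᵥ vyaw = 0 := by
  funext i
  fin_cases i <;>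
    simp [Hmat, vyaw, Matrix.mulVec, dotProduct,
      Fintype.sum_prod_type, Fin.sum_univ_succ]

/-- Unobservability of yaw: with gravity g = (0,0,−g₃), the vector (e₃,0,0,0)
lies in the kernel of every block row HΦᵏ of the observability matrix. -/
theorem yaw_unobservable (g₃ : ℝ) (Δt : ℝ) :
    ∀ k : ℕ,
      (Hmat * NormedSpace.exp (Δt • Amat ![0, 0, -g₃]) ^ k) *ᵥ
        (fun p : Fin 4 × Fin 3 => ![(![0, 0, 1] : Fin 3 → ℝ), 0, 0, 0] p.1 p.2) = 0 := by
  intro k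
  have hv : (fun p : Fin 4 × Fin 3 => ![(![0, 0, 1] : Fin 3 → ℝ), 0, 0, 0] p.1 p.2) = vyaw :=
    rfl
  rw [hv]
  have hM : (Δt • Amat ![0, 0, -g₃]) *ᵥ vyaw = 0 := by
    rw [Matrix.smul_mulVec, Amat_mulVec_vyaw, smul_zero]
  have hexp : NormedSpace.exp (Δt • Amat ![0, 0, -g₃]) *ᵥ vyaw = vyaw :=
    exp_mulVec_fixed _ _ hM
  have hpow : ∀ m : ℕ, NormedSpace.exp (Δt • Amat ![0, 0, -g₃]) ^ m *ᵥ vyaw = vyaw := by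
    intro m
    induction m with
    | zero => simp
    | succ m ih => rw [pow_succ, ← Matrix.mulVec_mulVec, hexp, ih]
  rw [← Matrix.mulVec_mulVec, hpow k, Hmat_mulVec_vyaw]
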